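/- Yoneda lemma for Hilbert modules over a C*-category: for each object x of A and each right Hilbert A-module F, there is an isometric isomorphism of Banach spaces K(h_x, F) ≅ F(x), where h_x is the representable module and K denotes compact operators. The inverse sends f ∈ F(x) to the operator ε_f with ε_f(a) = f·a for a ∈ h_x(y), whose adjoint is ε_f*(f') = ⟨f, f'⟩. -/

import Mathlib

universe u u' v v'

open Filter Topology

/-- A (possibly non-unital) C*-category structure on a family of hom-spaces:
a category enriched in complex Banach spaces, with contractive composition and a
conjugate-linear involution satisfying the C*-identity and positivity of elements
of the form `a* ∘ a` (encoded via self-adjoint square roots). -/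
class CStarCategory {Obj : Type u} (Hom : Obj → Obj → Type v)
    [∀ x y, NormedAddCommGroup (Hom x y)] [∀ x y, NormedSpace ℂ (Hom x y)]
    [∀ x y, CompleteSpace (Hom x y)] : Type (max u v) where
  comp : ∀ {x y z : Obj}, Hom y z → Hom x y → Hom x z
  adj : ∀ {x y : Obj}, Hom x y → Hom y x
  comp_assoc : ∀ {w x y z : Obj} (f : Hom y z) (g : Hom x y) (h : Hom w x),
      comp (comp f g) h = comp f (comp g h)
  comp_add_left : ∀ {x y z : Obj} (f f' : Hom y z) (g : Hom x y),
      comp (f + f') g = comp f g + comp f' g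
  comp_add_right : ∀ {x y z : Obj} (f : Hom y z) (g g' : Hom x y),
      comp f (g + g') = comp f g + comp f g'
  comp_smul_left : ∀ {x y z : Obj} (c : ℂ) (f : Hom y z) (g : Hom x y),
      comp (c • f) g = c • comp f g
  comp_smul_right : ∀ {x y z : Obj} (c : ℂ) (f : Hom y z) (g : Hom x y),
      comp f (c • g) = c • comp f g
  norm_comp_le : ∀ {x y z : Obj} (f : Hom y z) (g : Hom x y), ‖comp f g‖ ≤ ‖f‖ * ‖g‖
  adj_adj : ∀ {x y : Obj} (f : Hom x y), adj (adj f) = f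
  adj_add : ∀ {x y : Obj} (f g : Hom x y), adj (f + g) = adj f + adj g
  adj_smul : ∀ {x y : Obj} (c : ℂ) (f : Hom x y), adj (c • f) = (starRingEnd ℂ) c • adj f
  adj_comp : ∀ {x y z : Obj} (f : Hom y z) (g : Hom x y), adj (comp f g) = comp (adj g) (adj f)
  norm_adj_comp_self : ∀ {x y : Obj} (a : Hom x y), ‖comp (adj a) a‖ = ‖a‖ * ‖a‖
  pos_adj_comp_self : ∀ {x y : Obj} (a : Hom x y),
      ∃ b : Hom x x, adj b = b ∧ comp (adj a) a = comp b b

infixl:70 " ⊛ " => CStarCategory.comp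
postfix:max "†" => CStarCategory.adj

section CStarBasics

variable {Obj : Type u} {Hom : Obj → Obj → Type v}
  [∀ x y, NormedAddCommGroup (Hom x y)] [∀ x y, NormedSpace ℂ (Hom x y)]
  [∀ x y, CompleteSpace (Hom x y)] [CStarCategory Hom]

/-- Positivity of an endomorphism in a C*-category: it is of the form `b* ∘ b`. -/
def IsPos {x : Obj} (s : Hom x x) : Prop :=
  ∃ (z : Obj) (b : Hom x z), s = (b†) ⊛ b

/-- An approximate unit for the C*-algebra `Hom x x`: a directed net of positive,
norm-bounded, increasing elements with `‖e_i ∘ c - c‖ → 0` for every `c`. -/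
structure IsApproxUnit {ι : Type u'} [Preorder ι] {x : Obj} (e : ι → Hom x x) : Prop where
  nonempty : Nonempty ι
  directed : ∀ i j : ι, ∃ k, i ≤ k ∧ j ≤ k
  norm_le_one : ∀ i, ‖e i‖ ≤ 1
  pos : ∀ i, IsPos (e i)
  mono : ∀ i j, i ≤ j → IsPos (e j - e i)
  tendsto : ∀ c : Hom x x, Tendsto (fun i => ‖(e i ⊛ c) - c‖) atTop (nhds 0)

end CStarBasics

/-- Unitality, as a property of a C*-category. -/
def IsUnitalCStarCat {Obj : Type u} (Hom : Obj → Obj → Type v)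
    [∀ x y, NormedAddCommGroup (Hom x y)] [∀ x y, NormedSpace ℂ (Hom x y)]
    [∀ x y, CompleteSpace (Hom x y)] [CStarCategory Hom] : Prop :=
  ∀ x : Obj, ∃ e : Hom x x,
    (∀ {y : Obj} (a : Hom y x), e ⊛ a = a) ∧ (∀ {y : Obj} (b : Hom x y), b ⊛ e = b)

/-- A right Hilbert module over a C*-category: a ℂ-linear functor into vector spaces
equipped with `Hom`-valued inner products; each fiber is a Banach space whose norm is
induced by the inner product. -/
structure HilbMod {Obj : Type u} (Hom : Obj → Obj → Type v)
    [∀ x y, NormedAddCommGroup (Hom x y)] [∀ x y, NormedSpace ℂ (Hom x y)]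
    [∀ x y, CompleteSpace (Hom x y)] [CStarCategory Hom] : Type (max u (v + 1)) where
  carrier : Obj → Type v
  [nacg : ∀ x, NormedAddCommGroup (carrier x)]
  [nsp : ∀ x, NormedSpace ℂ (carrier x)]
  [cs : ∀ x, CompleteSpace (carrier x)]
  smulA : ∀ {x w : Obj}, carrier x → Hom w x → carrier w
  inner : ∀ {y z : Obj}, carrier z → carrier y → Hom y z
  smulA_add_left : ∀ {x w : Obj} (e e' : carrier x) (a : Hom w x),
      smulA (e + e') a = smulA e a + smulA e' a
  smulA_add_right : ∀ {x w : Obj} (e : carrier x) (a a' : Hom w x),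
      smulA e (a + a') = smulA e a + smulA e a'
  smulA_smul_left : ∀ {x w : Obj} (c : ℂ) (e : carrier x) (a : Hom w x),
      smulA (c • e) a = c • smulA e a
  smulA_smul_right : ∀ {x w : Obj} (c : ℂ) (e : carrier x) (a : Hom w x),
      smulA e (c • a) = c • smulA e a
  smulA_comp : ∀ {x w v : Obj} (e : carrier x) (a : Hom w x) (b : Hom v w),
      smulA (smulA e a) b = smulA e (a ⊛ b)
  inner_add_left : ∀ {y z : Obj} (e e' : carrier z) (f : carrier y),
      inner (e + e') f = inner e f + inner e' f
  inner_add_right : ∀ {y z : Obj} (e : carrier z) (f f' : carrier y),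
      inner e (f + f') = inner e f + inner e f'
  inner_smul_right : ∀ {y z : Obj} (c : ℂ) (e : carrier z) (f : carrier y),
      inner e (c • f) = c • inner e f
  adj_inner : ∀ {y z : Obj} (e : carrier z) (f : carrier y), (inner e f)† = inner f e
  inner_smulA : ∀ {y z w : Obj} (e : carrier z) (f : carrier y) (a : Hom w y),
      inner e (smulA f a) = inner e f ⊛ a
  inner_self_pos : ∀ {x : Obj} (e : carrier x), ∃ (z : Obj) (b : Hom x z),
      inner e e = (b†) ⊛ b
  inner_self_eq_zero : ∀ {x : Obj} (e : carrier x), inner e e = 0 → e = 0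
  norm_eq : ∀ {x : Obj} (e : carrier x), ‖e‖ = Real.sqrt ‖inner e e‖

attribute [instance] HilbMod.nacg HilbMod.nsp HilbMod.cs

section HilbModBasics

variable {Obj : Type u} {Hom : Obj → Obj → Type v}
  [∀ x y, NormedAddCommGroup (Hom x y)] [∀ x y, NormedSpace ℂ (Hom x y)]
  [∀ x y, CompleteSpace (Hom x y)] [CStarCategory Hom]

theorem HilbMod.inner_zero_left (M : HilbMod Hom) {y z : Obj} (f : M.carrier y) :
    M.inner (0 : M.carrier z) f = 0 := by
  have h := M.inner_add_left (0 : M.carrier z) 0 f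
  rw [add_zero] at h
  exact left_eq_add.mp h

theorem HilbMod.inner_zero_right (M : HilbMod Hom) {y z : Obj} (e : M.carrier z) :
    M.inner e (0 : M.carrier y) = 0 := by
  have h := M.inner_add_right e (0 : M.carrier y) 0
  rw [add_zero] at h
  exact left_eq_add.mp h

theorem HilbMod.inner_smul_left (M : HilbMod Hom) {y z : Obj} (c : ℂ)
    (e : M.carrier z) (f : M.carrier y) :
    M.inner (c • e) f = (starRingEnd ℂ) c • M.inner e f := by
  have h : M.inner (c • e) f = (M.inner f (c • e))† := (M.adj_inner f (c • e)).symm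
  rw [h, M.inner_smul_right, CStarCategory.adj_smul, M.adj_inner]

theorem HilbMod.inner_smulA_left (M : HilbMod Hom) {x y w : Obj}
    (f : M.carrier x) (a : Hom w x) (g : M.carrier y) :
    M.inner (M.smulA f a) g = (a†) ⊛ M.inner f g := by
  have h : M.inner (M.smulA f a) g = (M.inner g (M.smulA f a))† :=
    (M.adj_inner g (M.smulA f a)).symm
  rw [h, M.inner_smulA, CStarCategory.adj_comp, M.adj_inner]

/-- A bounded adjointable operator between Hilbert modules over a C*-category,
encoded by a pair of adjoint maps. -/
structure HilbOp (M N : HilbMod Hom) : Type (max u v) where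
  toFun : ∀ x, M.carrier x → N.carrier x
  adjFun : ∀ x, N.carrier x → M.carrier x
  adjoint_prop : ∀ {y z : Obj} (e : M.carrier z) (f : N.carrier y),
      N.inner (toFun z e) f = M.inner e (adjFun y f)

variable {M N P : HilbMod Hom}

theorem HilbOp.ext' {T S : HilbOp M N} (h1 : ∀ z v, T.toFun z v = S.toFun z v)
    (h2 : ∀ z w, T.adjFun z w = S.adjFun z w) : T = S := by
  cases T with
  | mk tf af ap =>
    cases S with
    | mk tf' af' ap' =>
      have e1 : tf = tf' := funext fun z => funext fun v => h1 z v
      subst e1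
      have e2 : af = af' := funext fun z => funext fun w => h2 z w
      subst e2
      rfl

/-- Composition of operators. -/
def HilbOp.comp (S : HilbOp N P) (T : HilbOp M N) : HilbOp M P where
  toFun z v := S.toFun z (T.toFun z v)
  adjFun z w := T.adjFun z (S.adjFun z w)
  adjoint_prop e f := by rw [S.adjoint_prop, T.adjoint_prop]

/-- The identity operator. -/
def HilbOp.id (M : HilbMod Hom) : HilbOp M M where
  toFun _ v := v
  adjFun _ v := v
  adjoint_prop _ _ := rfl

/-- Adjoint (involution) of an operator. -/
def HilbOp.star (T : HilbOp M N) : HilbOp N M where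
  toFun := T.adjFun
  adjFun := T.toFun
  adjoint_prop e f := by
    have h := congrArg CStarCategory.adj (T.adjoint_prop f e)
    rw [N.adj_inner, M.adj_inner] at h
    exact h.symm

instance : Zero (HilbOp M N) :=
  ⟨{ toFun := fun _ _ => 0
     adjFun := fun _ _ => 0
     adjoint_prop := fun e f => by
       rw [HilbMod.inner_zero_left, HilbMod.inner_zero_right] }⟩

instance : Add (HilbOp M N) :=
  ⟨fun T S =>
    { toFun := fun z v => T.toFun z v + S.toFun z v
      adjFun := fun z w => T.adjFun z w + S.adjFun z w
      adjoint_prop := fun e f => by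
        rw [N.inner_add_left, M.inner_add_right, T.adjoint_prop, S.adjoint_prop] }⟩

instance : SMul ℂ (HilbOp M N) :=
  ⟨fun c T =>
    { toFun := fun z v => c • T.toFun z v
      adjFun := fun z w => (starRingEnd ℂ) c • T.adjFun z w
      adjoint_prop := fun e f => by
        rw [HilbMod.inner_smul_left, M.inner_smul_right, T.adjoint_prop] }⟩

instance : AddCommMonoid (HilbOp M N) where
  add_assoc T S R := HilbOp.ext' (fun z v => add_assoc _ _ _) (fun z w => add_assoc _ _ _)
  zero_add T := HilbOp.ext' (fun z v => zero_add _) (fun z w => zero_add _)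
  add_zero T := HilbOp.ext' (fun z v => add_zero _) (fun z w => add_zero _)
  add_comm T S := HilbOp.ext' (fun z v => add_comm _ _) (fun z w => add_comm _ _)
  nsmul := nsmulRec

/-- The operator norm of an operator between Hilbert modules. -/
noncomputable def opNorm (T : HilbOp M N) : ℝ :=
  sInf {C : ℝ | 0 ≤ C ∧ ∀ (z : Obj) (v : M.carrier z), ‖T.toFun z v‖ ≤ C * ‖v‖}

/-- The rank-one operator `θ^{f,e} : v ↦ f·⟨e,v⟩`. -/
def thetaOp {x : Obj} (f : N.carrier x) (e : M.carrier x) : HilbOp M N where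
  toFun z v := N.smulA f (M.inner e v)
  adjFun z w := M.smulA e (N.inner f w)
  adjoint_prop v w := by
    rw [HilbMod.inner_smulA_left, M.adj_inner, M.inner_smulA]

/-- Compact operators: norm-limits of finite sums of rank-one operators. -/
def IsCompactOp (T : HilbOp M N) : Prop :=
  ∀ ε : ℝ, 0 < ε → ∃ (n : ℕ) (w : Fin n → Obj) (f : ∀ i, N.carrier (w i))
    (e : ∀ i, M.carrier (w i)), ∀ (z : Obj) (v : M.carrier z),
      ‖T.toFun z v - ∑ i, N.smulA (f i) (M.inner (e i) v)‖ ≤ ε * ‖v‖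

end HilbModBasics

/-- The representable right Hilbert module `h_x = Hom(-, x)`. -/
def repMod {Obj : Type u} (Hom : Obj → Obj → Type v)
    [∀ x y, NormedAddCommGroup (Hom x y)] [∀ x y, NormedSpace ℂ (Hom x y)]
    [∀ x y, CompleteSpace (Hom x y)] [CStarCategory Hom] (x : Obj) : HilbMod Hom where
  carrier z := Hom z x
  smulA e a := e ⊛ a
  inner e f := (e†) ⊛ f
  smulA_add_left e e' a := CStarCategory.comp_add_left e e' a
  smulA_add_right e a a' := CStarCategory.comp_add_right e a a'
  smulA_smul_left c e a := CStarCategory.comp_smul_left c e a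
  smulA_smul_right c e a := CStarCategory.comp_smul_right c e a
  smulA_comp e a b := CStarCategory.comp_assoc e a b
  inner_add_left e e' f := by
    show ((e + e')†) ⊛ f = ((e†) ⊛ f) + ((e'†) ⊛ f)
    rw [CStarCategory.adj_add, CStarCategory.comp_add_left]
  inner_add_right e f f' := CStarCategory.comp_add_right _ f f'
  inner_smul_right c e f := CStarCategory.comp_smul_right c _ f
  adj_inner e f := by rw [CStarCategory.adj_comp, CStarCategory.adj_adj]
  inner_smulA e f a := (CStarCategory.comp_assoc _ f a).symm
  inner_self_pos e := ⟨x, e, rfl⟩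
  inner_self_eq_zero := by
    intro z e h
    have h' : (e†) ⊛ e = 0 := h
    have h2 := CStarCategory.norm_adj_comp_self (Hom := Hom) e
    rw [h', norm_zero] at h2
    have h3 : ‖e‖ = 0 := by nlinarith [norm_nonneg e]
    exact norm_eq_zero.mp h3
  norm_eq := by
    intro z e
    rw [CStarCategory.norm_adj_comp_self, Real.sqrt_mul_self (norm_nonneg e)]

section YonedaOps

variable {Obj : Type u} {Hom : Obj → Obj → Type v}
  [∀ x y, NormedAddCommGroup (Hom x y)] [∀ x y, NormedSpace ℂ (Hom x y)]
  [∀ x y, CompleteSpace (Hom x y)] [CStarCategory Hom]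

/-- The operator `ε_m : h_x → M` sending `a` to `m·a`; its adjoint is `f ↦ ⟨m,f⟩`. -/
def epsOp {M : HilbMod Hom} {x : Obj} (m : M.carrier x) : HilbOp (repMod Hom x) M where
  toFun z a := M.smulA m a
  adjFun z f := M.inner m f
  adjoint_prop a f := HilbMod.inner_smulA_left M m a f

/-- The Yoneda operator `h_x → h_y` given by postcomposition with `a : Hom x y`. -/
def yonedaOp {x y : Obj} (a : Hom x y) : HilbOp (repMod Hom x) (repMod Hom y) where
  toFun z b := a ⊛ b
  adjFun z c := (a†) ⊛ c
  adjoint_prop b c := by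
    change Hom _ x at b
    change Hom _ y at c
    show ((a ⊛ b)†) ⊛ c = (b†) ⊛ ((a†) ⊛ c)
    rw [CStarCategory.adj_comp, CStarCategory.comp_assoc]

end YonedaOps

section Aux

variable {Obj : Type u} {Hom : Obj → Obj → Type v}
  [∀ x y, NormedAddCommGroup (Hom x y)] [∀ x y, NormedSpace ℂ (Hom x y)]
  [∀ x y, CompleteSpace (Hom x y)] [CStarCategory Hom]

theorem comp_zero_left {x y z : Obj} (g : Hom x y) : (0 : Hom y z) ⊛ g = 0 := by
  have h := CStarCategory.comp_add_left (0 : Hom y z) 0 g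
  rw [add_zero] at h
  exact (left_eq_add.mp h)

theorem comp_zero_right {x y z : Obj} (f : Hom y z) : f ⊛ (0 : Hom x y) = 0 := by
  have h := CStarCategory.comp_add_right f (0 : Hom x y) 0
  rw [add_zero] at h
  exact (left_eq_add.mp h)

theorem comp_neg_left {x y z : Obj} (f : Hom y z) (g : Hom x y) : (-f) ⊛ g = -(f ⊛ g) := by
  rw [← neg_one_smul ℂ f, CStarCategory.comp_smul_left, neg_one_smul]

theorem comp_neg_right {x y z : Obj} (f : Hom y z) (g : Hom x y) : f ⊛ (-g) = -(f ⊛ g) := by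
  rw [← neg_one_smul ℂ g, CStarCategory.comp_smul_right, neg_one_smul]

theorem comp_sub_left {x y z : Obj} (f f' : Hom y z) (g : Hom x y) :
    (f - f') ⊛ g = f ⊛ g - f' ⊛ g := by
  rw [sub_eq_add_neg, CStarCategory.comp_add_left, comp_neg_left, ← sub_eq_add_neg]

theorem comp_sub_right {x y z : Obj} (f : Hom y z) (g g' : Hom x y) :
    f ⊛ (g - g') = f ⊛ g - f ⊛ g' := by
  rw [sub_eq_add_neg, CStarCategory.comp_add_right, comp_neg_right, ← sub_eq_add_neg]

theorem adj_zero {x y : Obj} : ((0 : Hom x y)†) = 0 := by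
  have h := CStarCategory.adj_add (0 : Hom x y) 0
  rw [add_zero] at h
  exact (left_eq_add.mp h)

theorem adj_sub {x y : Obj} (f g : Hom x y) : ((f - g)†) = f† - g† := by
  rw [sub_eq_add_neg, CStarCategory.adj_add, ← neg_one_smul ℂ g, CStarCategory.adj_smul]
  simp [sub_eq_add_neg]

theorem norm_le_norm_adj {x y : Obj} (a : Hom x y) : ‖a‖ ≤ ‖a†‖ := by
  rcases eq_or_lt_of_le (norm_nonneg a) with h0 | h0
  · rw [← h0]; exact norm_nonneg _
  · have h1 : ‖a‖ * ‖a‖ ≤ ‖a†‖ * ‖a‖ := by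
      rw [← CStarCategory.norm_adj_comp_self a]; exact CStarCategory.norm_comp_le _ _
    exact le_of_mul_le_mul_right h1 h0

theorem norm_adj {x y : Obj} (a : Hom x y) : ‖a†‖ = ‖a‖ := by
  refine le_antisymm ?_ (norm_le_norm_adj a)
  have := norm_le_norm_adj (a†)
  rwa [CStarCategory.adj_adj] at this

noncomputable instance instEndNonUnitalRing (x : Obj) : NonUnitalRing (Hom x x) :=
  { (inferInstance : AddCommGroup (Hom x x)) with
    mul := CStarCategory.comp
    left_distrib := fun a b c => CStarCategory.comp_add_right a b c
    right_distrib := fun a b c => CStarCategory.comp_add_left a b c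
    zero_mul := fun a => comp_zero_left a
    mul_zero := fun a => comp_zero_right a
    mul_assoc := fun a b c => CStarCategory.comp_assoc a b c }

theorem mul_def {x : Obj} (a b : Hom x x) : a * b = a ⊛ b := rfl

noncomputable instance instEndNonUnitalNormedRing (x : Obj) :
    NonUnitalNormedRing (Hom x x) :=
  { instEndNonUnitalRing x, (inferInstance : NormedAddCommGroup (Hom x x)) with
    norm_mul_le := fun a b => CStarCategory.norm_comp_le a b }

noncomputable instance instEndStarRing (x : Obj) : StarRing (Hom x x) where
  star a := a†
  star_involutive := CStarCategory.adj_adj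
  star_mul := CStarCategory.adj_comp
  star_add := CStarCategory.adj_add

theorem star_def {x : Obj} (a : Hom x x) : star a = a† := rfl

noncomputable instance instEndCStarRing (x : Obj) : CStarRing (Hom x x) where
  norm_mul_self_le a := le_of_eq (CStarCategory.norm_adj_comp_self a).symm

noncomputable instance instEndIsScalarTower (x : Obj) :
    IsScalarTower ℂ (Hom x x) (Hom x x) :=
  ⟨fun c a b => CStarCategory.comp_smul_left c a b⟩

noncomputable instance instEndSMulCommClass (x : Obj) :
    SMulCommClass ℂ (Hom x x) (Hom x x) :=
  ⟨fun c a b => (CStarCategory.comp_smul_right c a b).symm⟩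

noncomputable instance instEndStarModule (x : Obj) : StarModule ℂ (Hom x x) :=
  ⟨fun c a => by
    show (c • a)† = star c • (a†)
    rw [CStarCategory.adj_smul]; rfl⟩

noncomputable instance instEndNonUnitalCStarAlgebra (x : Obj) :
    NonUnitalCStarAlgebra (Hom x x) :=
  { instEndNonUnitalNormedRing x, instEndStarRing x,
    (inferInstance : NormedSpace ℂ (Hom x x)),
    (inferInstance : CompleteSpace (Hom x x)),
    instEndCStarRing x, instEndIsScalarTower x, instEndSMulCommClass x,
    instEndStarModule x with }

end Aux

section Aux2

variable {Obj : Type u} {Hom : Obj → Obj → Type v}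
  [∀ x y, NormedAddCommGroup (Hom x y)] [∀ x y, NormedSpace ℂ (Hom x y)]
  [∀ x y, CompleteSpace (Hom x y)] [CStarCategory Hom]

theorem smulA_zero_left (F : HilbMod Hom) {x z : Obj} (a : Hom z x) :
    F.smulA (0 : F.carrier x) a = 0 := by
  have h := F.smulA_add_left (0 : F.carrier x) 0 a
  rw [add_zero] at h
  exact left_eq_add.mp h

theorem smulA_sub_left (F : HilbMod Hom) {x z : Obj} (e e' : F.carrier x) (a : Hom z x) :
    F.smulA (e - e') a = F.smulA e a - F.smulA e' a := by
  rw [sub_eq_add_neg, F.smulA_add_left, ← neg_one_smul ℂ e', F.smulA_smul_left,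
    neg_one_smul, ← sub_eq_add_neg]

theorem smulA_sub_right (F : HilbMod Hom) {x z : Obj} (e : F.carrier x) (a a' : Hom z x) :
    F.smulA e (a - a') = F.smulA e a - F.smulA e a' := by
  rw [sub_eq_add_neg, F.smulA_add_right, ← neg_one_smul ℂ a', F.smulA_smul_right,
    neg_one_smul, ← sub_eq_add_neg]

theorem inner_smulA_both (F : HilbMod Hom) {x z : Obj} (h : F.carrier x) (a b : Hom z x) :
    F.inner (F.smulA h a) (F.smulA h b) = (a†) ⊛ (F.inner h h ⊛ b) := by
  rw [F.inner_smulA_left, F.inner_smulA]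

theorem norm_inner_self (F : HilbMod Hom) {x : Obj} (h : F.carrier x) :
    ‖F.inner h h‖ = ‖h‖ ^ 2 := by
  rw [F.norm_eq h, Real.sq_sqrt (norm_nonneg _)]

/-- Upper bound: `‖h·a‖ ≤ ‖h‖ ‖a‖`. -/
theorem norm_smulA_le (F : HilbMod Hom) {x z : Obj} (h : F.carrier x) (a : Hom z x) :
    ‖F.smulA h a‖ ≤ ‖h‖ * ‖a‖ := by
  have key : ‖F.inner (F.smulA h a) (F.smulA h a)‖ ≤ (‖h‖ * ‖a‖) ^ 2 := by
    rw [inner_smulA_both]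
    calc ‖(a†) ⊛ (F.inner h h ⊛ a)‖ ≤ ‖a†‖ * ‖F.inner h h ⊛ a‖ :=
          CStarCategory.norm_comp_le _ _
      _ ≤ ‖a†‖ * (‖F.inner h h‖ * ‖a‖) := by
          gcongr; exact CStarCategory.norm_comp_le _ _
      _ = ‖a‖ * (‖h‖ ^ 2 * ‖a‖) := by rw [norm_adj, norm_inner_self]
      _ = (‖h‖ * ‖a‖) ^ 2 := by ring
  rw [F.norm_eq]
  calc Real.sqrt ‖F.inner (F.smulA h a) (F.smulA h a)‖
      ≤ Real.sqrt ((‖h‖ * ‖a‖) ^ 2) := Real.sqrt_le_sqrt key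
    _ = ‖h‖ * ‖a‖ := Real.sqrt_sq (by positivity)

/-- Lower bound: if `‖h·a‖ ≤ C ‖a‖` for all `a : Hom x x`, then `‖h‖ ≤ C`. -/
theorem norm_le_of_smulA_bound (F : HilbMod Hom) {x : Obj} (h : F.carrier x) {C : ℝ}
    (hC0 : 0 ≤ C) (hb : ∀ a : Hom x x, ‖F.smulA h a‖ ≤ C * ‖a‖) : ‖h‖ ≤ C := by
  set p : Hom x x := F.inner h h with hp
  have hpadj : (p†) = p := F.adj_inner h h
  by_cases hp0 : p = 0
  · have : h = 0 := F.inner_self_eq_zero h (by rw [← hp, hp0])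
    rw [this, norm_zero]; exact hC0
  · have hnp : 0 < ‖p‖ := norm_pos_iff.mpr hp0
    have e1 : ‖p ⊛ p‖ = ‖p‖ * ‖p‖ := by
      nth_rewrite 1 [← hpadj]
      exact CStarCategory.norm_adj_comp_self p
    have e2 : ‖(p ⊛ p) ⊛ (p ⊛ p)‖ = (‖p‖ * ‖p‖) * (‖p‖ * ‖p‖) := by
      have : ((p ⊛ p)†) = p ⊛ p := by
        rw [CStarCategory.adj_comp, hpadj]
      nth_rewrite 1 [← this]
      rw [CStarCategory.norm_adj_comp_self (p ⊛ p), e1]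
    have e3 : (p ⊛ p) ⊛ (p ⊛ p) = (p ⊛ (p ⊛ p)) ⊛ p := by
      rw [CStarCategory.comp_assoc, CStarCategory.comp_assoc, CStarCategory.comp_assoc]
    have e4 : ‖p‖ ^ 4 ≤ ‖p ⊛ (p ⊛ p)‖ * ‖p‖ := by
      calc ‖p‖ ^ 4 = (‖p‖ * ‖p‖) * (‖p‖ * ‖p‖) := by ring
        _ = ‖(p ⊛ (p ⊛ p)) ⊛ p‖ := by rw [← e2, e3]
        _ ≤ ‖p ⊛ (p ⊛ p)‖ * ‖p‖ := CStarCategory.norm_comp_le _ _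
    have e5 : ‖F.smulA h p‖ ^ 2 = ‖p ⊛ (p ⊛ p)‖ := by
      rw [F.norm_eq, Real.sq_sqrt (norm_nonneg _), inner_smulA_both, hpadj, ← hp]
    have e6 : ‖F.smulA h p‖ ≤ C * ‖p‖ := hb p
    have e7 : ‖p‖ ^ 3 ≤ ‖p ⊛ (p ⊛ p)‖ := by
      have := e4
      nlinarith
    have e6' : ‖F.smulA h p‖ ^ 2 ≤ (C * ‖p‖) ^ 2 := by
      have h0 := norm_nonneg (F.smulA h p)
      nlinarith
    have e8 : ‖p‖ ≤ C ^ 2 := by nlinarith [mul_pos hnp hnp]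
    rw [F.norm_eq, ← hp]
    calc Real.sqrt ‖p‖ ≤ Real.sqrt (C ^ 2) := Real.sqrt_le_sqrt e8
      _ = C := Real.sqrt_sq hC0

end Aux2

section Aux3

variable {Obj : Type u} {Hom : Obj → Obj → Type v}
  [∀ x y, NormedAddCommGroup (Hom x y)] [∀ x y, NormedSpace ℂ (Hom x y)]
  [∀ x y, CompleteSpace (Hom x y)] [CStarCategory Hom]

theorem eps_compact (F : HilbMod Hom) {x : Obj} (f : F.carrier x) :
    IsCompactOp (epsOp (M := F) f) := by
  intro ε hε
  obtain ⟨z0, b0, hb0⟩ := F.inner_self_pos f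
  obtain ⟨c, hc_adj, hcc⟩ := CStarCategory.pos_adj_comp_self b0
  set p : Hom x x := F.inner f f with hp
  have hpc : p = c * c := by rw [hb0, hcc]; rfl
  have hc : IsSelfAdjoint c := hc_adj
  set δ : ℝ := ε ^ 2 with hδdef
  have hδ : 0 < δ := by positivity
  set w : ℝ → ℝ := fun s => s ^ 2 / (s ^ 2 + δ) with hw
  have hwc : Continuous w := by
    apply Continuous.div (by fun_prop) (by fun_prop)
    intro s; positivity
  have hw0 : w 0 = 0 := by simp [hw]
  set u : Hom x x := cfcₙ w c with hu
  have hu_sa : IsSelfAdjoint u := cfcₙ_predicate w c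
  have hsqc : Continuous (fun s : ℝ => s * s) := by fun_prop
  have hsq : cfcₙ (fun s : ℝ => s * s) c = p := by
    rw [cfcₙ_mul _ _ c (by fun_prop) (by norm_num) (by fun_prop) (by norm_num),
      cfcₙ_id' ℝ c, hpc]
  have m1 : cfcₙ (fun s : ℝ => (s * s) * w s) c = p * u := by
    rw [cfcₙ_mul _ _ c hsqc.continuousOn (by norm_num) hwc.continuousOn hw0, hsq, hu]
  have m2 : cfcₙ (fun s : ℝ => w s * (s * s)) c = u * p := by
    rw [cfcₙ_mul _ _ c hwc.continuousOn hw0 hsqc.continuousOn (by norm_num), hsq, hu]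
  have m3 : cfcₙ (fun s : ℝ => w s * ((s * s) * w s)) c = u * (p * u) := by
    rw [cfcₙ_mul w (fun s : ℝ => (s * s) * w s) c hwc.continuousOn hw0 ((hsqc.mul hwc).continuousOn)
      (by norm_num [hw0]), m1, hu]
  set g : ℝ → ℝ := fun s => (s * s) - (s * s) * w s - (w s * (s * s) - w s * ((s * s) * w s))
    with hg
  have hgc : Continuous g := by fun_prop
  have hgq : cfcₙ g c = p - p * u - (u * p - u * (p * u)) := by
    rw [hg]
    rw [cfcₙ_sub (fun s : ℝ => (s * s) - (s * s) * w s)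
        (fun s : ℝ => w s * (s * s) - w s * ((s * s) * w s)) c ((hsqc.sub (hsqc.mul hwc)).continuousOn) (by norm_num [hw0])
        ((hwc.mul hsqc).sub (hwc.mul (hsqc.mul hwc)) |>.continuousOn) (by norm_num [hw0])]
    rw [cfcₙ_sub (fun s : ℝ => s * s) (fun s : ℝ => (s * s) * w s) c hsqc.continuousOn (by norm_num) ((hsqc.mul hwc).continuousOn)
        (by norm_num [hw0])]
    rw [cfcₙ_sub (fun s : ℝ => w s * (s * s)) (fun s : ℝ => w s * ((s * s) * w s)) c ((hwc.mul hsqc).continuousOn) (by norm_num [hw0])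
        ((hwc.mul (hsqc.mul hwc)).continuousOn) (by norm_num [hw0])]
    rw [hsq, m1, m2, m3]
  have hgbound : ∀ s : ℝ, ‖g s‖ ≤ δ := by
    intro s
    have hd : (0:ℝ) < s ^ 2 + δ := by positivity
    have hval : g s = s ^ 2 * δ ^ 2 / (s ^ 2 + δ) ^ 2 := by
      rw [hg, hw]
      field_simp
      ring
    rw [Real.norm_eq_abs, hval, abs_of_nonneg (by positivity)]
    rw [div_le_iff₀ (by positivity)]
    nlinarith [sq_nonneg s, sq_nonneg (s ^ 2 - δ), hδ]
  have hqnorm : ‖p - p * u - (u * p - u * (p * u))‖ ≤ δ := by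
    rw [← hgq]
    exact norm_cfcₙ_le (fun s _ => hgbound s)
  -- now the operator estimate
  refine ⟨1, fun _ => x, fun _ => f, fun _ => u, fun z a => ?_⟩
  have key : ∀ a : Hom z x, ‖F.smulA f a - F.smulA f (u ⊛ a)‖ ≤ ε * ‖a‖ := by
    intro a
    rw [← smulA_sub_right]
    set b : Hom z x := a - u ⊛ a with hb
    have hbadj : (b†) = (a†) - (a†) ⊛ u := by
      rw [hb, adj_sub, CStarCategory.adj_comp, show (u†) = u from hu_sa]
    set q : Hom x x := p - p ⊛ u - (u ⊛ p - u ⊛ (p ⊛ u)) with hq2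
    have hq2' : q = p - p * u - (u * p - u * (p * u)) := rfl
    have hinner : F.inner (F.smulA f b) (F.smulA f b) = (a†) ⊛ (q ⊛ a) := by
      rw [inner_smulA_both, ← hp]
      have hpb : p ⊛ b = (p - p ⊛ u) ⊛ a := by
        rw [hb, comp_sub_right, comp_sub_left, CStarCategory.comp_assoc]
      rw [hpb, hbadj]
      set s : Hom x x := p - p ⊛ u with hs
      rw [comp_sub_left (a†) ((a†) ⊛ u) (s ⊛ a), CStarCategory.comp_assoc (a†) u (s ⊛ a),
        ← comp_sub_right]
      congr 1
      rw [← CStarCategory.comp_assoc u s a, ← comp_sub_left]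
      congr 1
      rw [hs, comp_sub_right, hq2]
    have hnormineq : ‖F.inner (F.smulA f b) (F.smulA f b)‖ ≤ δ * (‖a‖ * ‖a‖) := by
      rw [hinner]
      calc ‖(a†) ⊛ (q ⊛ a)‖ ≤ ‖a†‖ * ‖q ⊛ a‖ := CStarCategory.norm_comp_le _ _
        _ ≤ ‖a†‖ * (‖q‖ * ‖a‖) := by gcongr; exact CStarCategory.norm_comp_le _ _
        _ ≤ ‖a‖ * (δ * ‖a‖) := by
            rw [norm_adj]
            gcongr
            rw [hq2']
            exact hqnorm
        _ = δ * (‖a‖ * ‖a‖) := by ring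
    rw [F.norm_eq]
    calc Real.sqrt ‖F.inner (F.smulA f b) (F.smulA f b)‖
        ≤ Real.sqrt ((ε * ‖a‖) ^ 2) := by
          apply Real.sqrt_le_sqrt
          calc ‖F.inner (F.smulA f b) (F.smulA f b)‖ ≤ δ * (‖a‖ * ‖a‖) := hnormineq
            _ = (ε * ‖a‖) ^ 2 := by rw [hδdef]; ring
      _ = ε * ‖a‖ := Real.sqrt_sq (by positivity)
  rw [Fin.sum_univ_one]
  have hrw : (repMod Hom x).inner u a = u ⊛ a := by
    show (u†) ⊛ a = u ⊛ a
    rw [show (u†) = u from hu_sa]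
  rw [hrw]
  exact key a

end Aux3

section Aux4

variable {Obj : Type u} {Hom : Obj → Obj → Type v}
  [∀ x y, NormedAddCommGroup (Hom x y)] [∀ x y, NormedSpace ℂ (Hom x y)]
  [∀ x y, CompleteSpace (Hom x y)] [CStarCategory Hom]

/-- `h ↦ h·a` as an additive monoid homomorphism. -/
def smulAHom (F : HilbMod Hom) {x z : Obj} (a : Hom z x) : F.carrier x →+ F.carrier z where
  toFun h := F.smulA h a
  map_zero' := smulA_zero_left F a
  map_add' e e' := F.smulA_add_left e e' a

theorem opNorm_eps (F : HilbMod Hom) {x : Obj} (f : F.carrier x) :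
    opNorm (epsOp (M := F) f) = ‖f‖ := by
  have hmem : ‖f‖ ∈ {C : ℝ | 0 ≤ C ∧ ∀ (z : Obj) (v : (repMod Hom x).carrier z),
      ‖(epsOp (M := F) f).toFun z v‖ ≤ C * ‖v‖} :=
    ⟨norm_nonneg f, fun z v => norm_smulA_le F f v⟩
  unfold opNorm
  apply le_antisymm
  · exact csInf_le ⟨0, fun C hC => hC.1⟩ hmem
  · exact le_csInf ⟨_, hmem⟩ fun C hC => norm_le_of_smulA_bound F f hC.1 (fun a => hC.2 x a)

end Aux4

theorem hilbmod_yoneda' {Obj : Type u} {Hom : Obj → Obj → Type v}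
    [∀ x y, NormedAddCommGroup (Hom x y)] [∀ x y, NormedSpace ℂ (Hom x y)]
    [∀ x y, CompleteSpace (Hom x y)] [CStarCategory Hom]
    (F : HilbMod Hom) (x : Obj) :
    (∀ f : F.carrier x,
      IsCompactOp (epsOp (M := F) f) ∧
      opNorm (epsOp (M := F) f) = ‖f‖ ∧
      (∀ (y : Obj) (a : Hom y x), (epsOp (M := F) f).toFun y a = F.smulA f a) ∧
      (∀ (y : Obj) (f' : F.carrier y), (epsOp (M := F) f).adjFun y f' = F.inner f f')) ∧
    Function.Injective (fun f : F.carrier x => epsOp (M := F) f) ∧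
    (∀ T : HilbOp (repMod Hom x) F, IsCompactOp T → ∃ f : F.carrier x, T = epsOp f) := by
  refine ⟨fun f => ⟨eps_compact F f, opNorm_eps F f, fun y a => rfl, fun y f' => rfl⟩, ?_, ?_⟩
  · -- injectivity
    intro f g hfg
    have htf : ∀ (z : Obj) (a : Hom z x), F.smulA f a = F.smulA g a := fun z a =>
      congrFun (congrFun (congrArg HilbOp.toFun hfg) z) a
    have hb : ∀ a : Hom x x, ‖F.smulA (f - g) a‖ ≤ 0 * ‖a‖ := by
      intro a
      rw [smulA_sub_left, htf x a, sub_self, norm_zero, zero_mul]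
    have h0 := norm_le_of_smulA_bound F (f - g) le_rfl hb
    rwa [norm_le_zero_iff, sub_eq_zero] at h0
  · -- surjectivity
    intro T hT
    have H : ∀ n : ℕ, ∃ gg : F.carrier x, ∀ (z : Obj) (a : Hom z x),
        ‖T.toFun z a - F.smulA gg a‖ ≤ (1 / ((n : ℝ) + 1)) * ‖a‖ := by
      intro n
      obtain ⟨k, ww, ff, ee, hb⟩ := hT (1 / ((n : ℝ) + 1)) (by positivity)
      refine ⟨∑ i, F.smulA (ff i) ((ee i)†), fun z a => ?_⟩
      have hs : F.smulA (∑ i, F.smulA (ff i) ((ee i)†)) a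
          = ∑ i, F.smulA (ff i) ((repMod Hom x).inner (ee i) a) := by
        refine (map_sum (smulAHom F a) (fun i => F.smulA (ff i) ((ee i)†)) Finset.univ).trans ?_
        refine Finset.sum_congr rfl fun i _ => ?_
        show F.smulA (F.smulA (ff i) ((ee i)†)) a = _
        rw [F.smulA_comp]
        rfl
      rw [hs]
      exact hb z a
    choose g hg using H
    have htend : Tendsto (fun N : ℕ => 2 / ((N : ℝ) + 1)) atTop (nhds 0) := by
      have h := tendsto_one_div_add_atTop_nhds_zero_nat.const_mul (2 : ℝ)
      simpa [mul_one_div, div_eq_mul_inv] using h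
    have hCau : CauchySeq g := by
      apply cauchySeq_of_le_tendsto_0 (fun N : ℕ => 2 / ((N : ℝ) + 1)) _ htend
      intro n m N hn hm
      rw [dist_eq_norm]
      have hb2 : ∀ a : Hom x x, ‖F.smulA (g n - g m) a‖
          ≤ (1 / ((n : ℝ) + 1) + 1 / ((m : ℝ) + 1)) * ‖a‖ := by
        intro a
        rw [smulA_sub_left]
        calc ‖F.smulA (g n) a - F.smulA (g m) a‖
            = ‖(T.toFun x a - F.smulA (g m) a) - (T.toFun x a - F.smulA (g n) a)‖ := by
              congr 1; abel
          _ ≤ ‖T.toFun x a - F.smulA (g m) a‖ + ‖T.toFun x a - F.smulA (g n) a‖ :=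
              norm_sub_le _ _
          _ ≤ (1 / ((m : ℝ) + 1)) * ‖a‖ + (1 / ((n : ℝ) + 1)) * ‖a‖ :=
              add_le_add (hg m x a) (hg n x a)
          _ = (1 / ((n : ℝ) + 1) + 1 / ((m : ℝ) + 1)) * ‖a‖ := by ring
      refine (norm_le_of_smulA_bound F (g n - g m) (by positivity) hb2).trans ?_
      have e1 : (1 : ℝ) / ((n : ℝ) + 1) ≤ 1 / ((N : ℝ) + 1) := by
        apply one_div_le_one_div_of_le (by positivity)
        have : (N : ℝ) ≤ (n : ℝ) := by exact_mod_cast hn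
        linarith
      have e2 : (1 : ℝ) / ((m : ℝ) + 1) ≤ 1 / ((N : ℝ) + 1) := by
        apply one_div_le_one_div_of_le (by positivity)
        have : (N : ℝ) ≤ (m : ℝ) := by exact_mod_cast hm
        linarith
      have e3 : (2 : ℝ) / ((N : ℝ) + 1) = 1 / ((N : ℝ) + 1) + 1 / ((N : ℝ) + 1) := by ring
      linarith
    obtain ⟨fl, hfl⟩ := cauchySeq_tendsto_of_complete hCau
    have hgl : Tendsto (fun n : ℕ => ‖g n - fl‖) atTop (nhds 0) := by
      rwa [tendsto_iff_norm_sub_tendsto_zero] at hfl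
    have htf : ∀ (z : Obj) (a : Hom z x), T.toFun z a = F.smulA fl a := by
      intro z a
      have hbnd : ∀ n : ℕ, ‖T.toFun z a - F.smulA fl a‖
          ≤ 1 / ((n : ℝ) + 1) * ‖a‖ + ‖g n - fl‖ * ‖a‖ := by
        intro n
        calc ‖T.toFun z a - F.smulA fl a‖
            = ‖(T.toFun z a - F.smulA (g n) a) + (F.smulA (g n) a - F.smulA fl a)‖ := by
              congr 1; abel
          _ ≤ ‖T.toFun z a - F.smulA (g n) a‖ + ‖F.smulA (g n) a - F.smulA fl a‖ :=
              norm_add_le _ _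
          _ ≤ 1 / ((n : ℝ) + 1) * ‖a‖ + ‖g n - fl‖ * ‖a‖ := by
              apply add_le_add (hg n z a)
              rw [← smulA_sub_left]
              exact norm_smulA_le F _ a
      have hlim : Tendsto (fun n : ℕ => 1 / ((n : ℝ) + 1) * ‖a‖ + ‖g n - fl‖ * ‖a‖)
          atTop (nhds 0) := by
        have h := (tendsto_one_div_add_atTop_nhds_zero_nat.mul_const ‖a‖).add
          (hgl.mul_const ‖a‖)
        simpa using h
      have h0 : ‖T.toFun z a - F.smulA fl a‖ ≤ 0 := ge_of_tendsto' hlim hbnd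
      have h1 : T.toFun z a - F.smulA fl a = 0 := by rwa [norm_le_zero_iff] at h0
      exact sub_eq_zero.mp h1
    have haf : ∀ (y : Obj) (f' : F.carrier y), T.adjFun y f' = F.inner fl f' := by
      intro y f'
      set d : Hom y x := (show Hom y x from T.adjFun y f') - F.inner fl f' with hd
      have h1 : F.inner (T.toFun y d) f' = (d†) ⊛ (T.adjFun y f') := T.adjoint_prop d f'
      have h2 : F.inner (T.toFun y d) f' = (d†) ⊛ (F.inner fl f') := by
        rw [htf y d]
        exact F.inner_smulA_left fl d f'
      have h12 : (d†) ⊛ (T.adjFun y f') = (d†) ⊛ (F.inner fl f') := by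
        rw [← h1]; exact h2
      have h3 : (d†) ⊛ d = 0 := by
        have hdd : (d†) ⊛ d = (d†) ⊛ (T.adjFun y f') - (d†) ⊛ (F.inner fl f') := by
          exact (congrArg (fun t => (d†) ⊛ t) hd).trans (comp_sub_right _ _ _)
        rw [hdd, h12, sub_self]
      have h4 : ‖d‖ = 0 := by
        have h5 := CStarCategory.norm_adj_comp_self d
        rw [h3, norm_zero] at h5
        nlinarith [norm_nonneg d]
      exact sub_eq_zero.mp (hd.symm.trans (norm_eq_zero.mp h4))
    exact ⟨fl, HilbOp.ext' (fun z v => htf z v) (fun z w' => haf z w')⟩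

/-- (Yoneda lemma for Hilbert modules over a C*-category.)  For
each object `x` of `A` and each right Hilbert `A`-module `F`, the assignment
`f ↦ ε_f` (where `ε_f(a) = f·a`, with adjoint `ε_f*(f') = ⟨f,f'⟩`) is an isometric
isomorphism `F(x) ≅ K(h_x, F)` onto the compact operators from the representable
module `h_x` to `F`. -/
theorem hilbmod_yoneda {Obj : Type u} {Hom : Obj → Obj → Type v}
    [∀ x y, NormedAddCommGroup (Hom x y)] [∀ x y, NormedSpace ℂ (Hom x y)]
    [∀ x y, CompleteSpace (Hom x y)] [CStarCategory Hom]
    (F : HilbMod Hom) (x : Obj) :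
    (∀ f : F.carrier x,
      IsCompactOp (epsOp (M := F) f) ∧
      opNorm (epsOp (M := F) f) = ‖f‖ ∧
      (∀ (y : Obj) (a : Hom y x), (epsOp (M := F) f).toFun y a = F.smulA f a) ∧
      (∀ (y : Obj) (f' : F.carrier y), (epsOp (M := F) f).adjFun y f' = F.inner f f')) ∧
    Function.Injective (fun f : F.carrier x => epsOp (M := F) f) ∧
    (∀ T : HilbOp (repMod Hom x) F, IsCompactOp T → ∃ f : F.carrier x, T = epsOp f) := by
  exact hilbmod_yoneda' F x
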